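/- Let d, D, c, μ, L > 0 and let α > 0, β > 0 satisfy -d(α² + β²) + cα = 0 and -Dα² + cα + β·cosh(βL)/(sinh(βL) + dβ·cosh(βL)) = 0, and set γ = μ/(sinh(βL) + dβ·cosh(βL)). Then the pair u(x) = e^{αx}, v(x,y) = γ e^{αx} sinh(β(y+L)) satisfies, on the strip ℝ×[-L,0]: (i) -dΔv + c∂ₓv = 0 at every point; (ii) the road equation -Du''(x) + cu'(x) + (1/μ)∂_yv(x,0) = 0 for every x; (iii) the exchange condition d∂_yv(x,0) = μu(x) - v(x,0) for every x; (iv) v(x,-L) = 0 for every x; and (v) u(x) → 0 and v(x,y) → 0 as x → -∞, uniformly in y ∈ [-L,0]. -/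

import Mathlib

open Real Filter Topology Set

noncomputable section

/-- Partial derivative in the first (horizontal) variable. -/
def pdx (u : ℝ → ℝ → ℝ) (x y : ℝ) : ℝ := deriv (fun t => u t y) x

/-- Partial derivative in the second (vertical) variable. -/
def pdy (u : ℝ → ℝ → ℝ) (x y : ℝ) : ℝ := deriv (fun t => u x t) y

/-- Second partial derivative in the first variable. -/
def pdxx (u : ℝ → ℝ → ℝ) (x y : ℝ) : ℝ := deriv (fun t => pdx u t y) x

/-- Second partial derivative in the second variable. -/
def pdyy (u : ℝ → ℝ → ℝ) (x y : ℝ) : ℝ := deriv (fun t => pdy u x t) y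

/-- Exponential solutions of the linearized truncated two-species
problem. If `α, β > 0` satisfy `-d(α² + β²) + cα = 0` and
`-Dα² + cα + β·cosh(βL)/(sinh(βL) + dβ·cosh(βL)) = 0`, and
`γ = μ/(sinh(βL) + dβ·cosh(βL))`, then `u(x) = e^{αx}`,
`v(x,y) = γ e^{αx} sinh(β(y+L))` solve the linearized system on the strip:
the bulk equation, the road equation, the exchange condition, the bottom Dirichlet
condition, and decay as `x → -∞` (uniformly in `y` for `v`). -/
theorem exponential_solutions_two_species
    (d D c μ L α β γ : ℝ) (hd : 0 < d) (hD : 0 < D) (hc : 0 < c) (hμ : 0 < μ)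
    (hL : 0 < L) (hα : 0 < α) (hβ : 0 < β)
    (hrel1 : -d * (α ^ 2 + β ^ 2) + c * α = 0)
    (hrel2 : -D * α ^ 2 + c * α
        + β * Real.cosh (β * L)
          / (Real.sinh (β * L) + d * β * Real.cosh (β * L)) = 0)
    (hγ : γ = μ / (Real.sinh (β * L) + d * β * Real.cosh (β * L)))
    (u : ℝ → ℝ) (v : ℝ → ℝ → ℝ)
    (hu : ∀ x : ℝ, u x = Real.exp (α * x))
    (hv : ∀ x y : ℝ, v x y = γ * Real.exp (α * x) * Real.sinh (β * (y + L))) :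
    (∀ x y : ℝ, -L ≤ y → y ≤ 0 →
        -d * (pdxx v x y + pdyy v x y) + c * pdx v x y = 0) ∧
    (∀ x : ℝ, -D * deriv (deriv u) x + c * deriv u x + (1/μ) * pdy v x 0 = 0) ∧
    (∀ x : ℝ, d * pdy v x 0 = μ * u x - v x 0) ∧
    (∀ x : ℝ, v x (-L) = 0) ∧
    Tendsto u atBot (𝓝 0) ∧
    (∀ ε > (0:ℝ), ∃ M : ℝ, ∀ x ≤ M, ∀ y : ℝ, -L ≤ y → y ≤ 0 → |v x y| < ε) := by

  have hden : 0 < Real.sinh (β * L) + d * β * Real.cosh (β * L) := by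
    have h1 : 0 < Real.sinh (β * L) := Real.sinh_pos_iff.2 (by positivity)
    have h2 : 0 < Real.cosh (β * L) := Real.cosh_pos _
    positivity
  have hden' : Real.sinh (β * L) + d * β * Real.cosh (β * L) ≠ 0 := ne_of_gt hden
  have hγpos : 0 < γ := hγ ▸ div_pos hμ hden
  have hE : ∀ x : ℝ, HasDerivAt (fun t => Real.exp (α * t)) (α * Real.exp (α * x)) x := by
    intro x
    simpa [mul_comm] using (((hasDerivAt_id x).const_mul α).exp)
  have hpdx : ∀ x y : ℝ, pdx v x y = γ * (α * Real.exp (α * x)) * Real.sinh (β * (y + L)) := by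
    intro x y
    unfold pdx
    simp only [hv]
    exact (((hE x).const_mul γ).mul_const _).deriv
  have hpdxx : ∀ x y : ℝ, pdxx v x y = γ * (α * (α * Real.exp (α * x))) * Real.sinh (β * (y + L)) := by
    intro x y
    unfold pdxx
    simp only [hpdx]
    exact ((((hE x).const_mul α).const_mul γ).mul_const _).deriv
  have hS : ∀ y : ℝ, HasDerivAt (fun t => Real.sinh (β * (t + L))) (β * Real.cosh (β * (y + L))) y := by
    intro y
    simpa [mul_comm] using (((hasDerivAt_id y).add_const L).const_mul β).sinh
  have hC : ∀ y : ℝ, HasDerivAt (fun t => Real.cosh (β * (t + L))) (β * Real.sinh (β * (y + L))) y := by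
    intro y
    simpa [mul_comm] using (((hasDerivAt_id y).add_const L).const_mul β).cosh
  have hpdy : ∀ x y : ℝ, pdy v x y = γ * Real.exp (α * x) * (β * Real.cosh (β * (y + L))) := by
    intro x y
    unfold pdy
    simp only [hv]
    exact ((hS y).const_mul (γ * Real.exp (α * x))).deriv
  have hpdyy : ∀ x y : ℝ, pdyy v x y = γ * Real.exp (α * x) * (β * (β * Real.sinh (β * (y + L)))) := by
    intro x y
    unfold pdyy
    simp only [hpdy]
    have := (((hC y).const_mul β).const_mul (γ * Real.exp (α * x))).deriv
    simpa [mul_assoc] using this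
  have hu' : u = fun x => Real.exp (α * x) := funext hu
  have hdu : deriv u = fun x => α * Real.exp (α * x) := by
    funext x; rw [hu']; exact (hE x).deriv
  refine ⟨?_, ?_, ?_, ?_, ?_, ?_⟩
  · intro x y _ _
    rw [hpdxx, hpdyy, hpdx]
    linear_combination (γ * Real.exp (α * x) * Real.sinh (β * (y + L))) * hrel1
  · intro x
    have hddu : deriv (deriv u) x = α * (α * Real.exp (α * x)) := by
      rw [hdu]; exact ((hE x).const_mul α).deriv
    have hrel2' : (-D * α ^ 2 + c * α) * (Real.sinh (β * L) + d * β * Real.cosh (β * L))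
        + β * Real.cosh (β * L) = 0 := by
      have h := hrel2
      field_simp [hden'] at h
      linear_combination h
    rw [hddu, hdu, hpdy, hγ]
    simp only [zero_add]
    field_simp [hden']
    linear_combination (Real.exp (α * x)) * hrel2'
  · intro x
    rw [hpdy, hv, hu, hγ]
    simp only [zero_add]
    field_simp
    ring
  · intro x
    simp [hv]
  · rw [hu']
    have h1 : Tendsto (fun x : ℝ => α * x) atBot atBot :=
      tendsto_atBot_atBot.2 fun b => ⟨b / α, fun x hx => by
        calc α * x ≤ α * (b / α) := by nlinarith
        _ = b := by field_simp⟩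
    exact Real.tendsto_exp_atBot.comp h1
  · intro ε hε
    set C : ℝ := γ * Real.sinh (β * L) with hCdef
    have hC0 : 0 < C := mul_pos hγpos (Real.sinh_pos_iff.2 (by positivity))
    refine ⟨Real.log (ε / (2 * C)) / α, fun x hx y hy1 hy2 => ?_⟩
    have hb1 : 0 ≤ β * (y + L) := by nlinarith
    have hb2 : β * (y + L) ≤ β * L := by nlinarith
    have hs1 : 0 ≤ Real.sinh (β * (y + L)) := Real.sinh_nonneg_iff.2 hb1
    have hs2 : Real.sinh (β * (y + L)) ≤ Real.sinh (β * L) := Real.sinh_le_sinh.2 hb2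
    have hEx : Real.exp (α * x) ≤ ε / (2 * C) := by
      have : α * x ≤ Real.log (ε / (2 * C)) := by
        have := mul_le_mul_of_nonneg_left hx (le_of_lt hα)
        calc α * x ≤ α * (Real.log (ε / (2 * C)) / α) := this
        _ = Real.log (ε / (2 * C)) := by field_simp
      calc Real.exp (α * x) ≤ Real.exp (Real.log (ε / (2 * C))) := Real.exp_le_exp.2 this
      _ = ε / (2 * C) := Real.exp_log (by positivity)
    rw [hv]
    have habs : |γ * Real.exp (α * x) * Real.sinh (β * (y + L))|
        = γ * Real.exp (α * x) * Real.sinh (β * (y + L)) := by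
      apply abs_of_nonneg; positivity
    rw [habs]
    have hEpos : 0 < Real.exp (α * x) := Real.exp_pos _
    calc γ * Real.exp (α * x) * Real.sinh (β * (y + L))
        ≤ γ * Real.exp (α * x) * Real.sinh (β * L) :=
          mul_le_mul_of_nonneg_left hs2 (by positivity)
      _ = C * Real.exp (α * x) := by ring
      _ ≤ C * (ε / (2 * C)) := mul_le_mul_of_nonneg_left hEx hC0.le
      _ = ε / 2 := by field_simp
      _ < ε := by linarith
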